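/- If A is an alternal mould, then A is mantar-invariant; that is, A(u_1,...,u_r) = (-1)^{r-1} A(u_r,...,u_1) for all r ≥ 1. -/
import Mathlib


open List

variable {K : Type*} [Field K] [CharZero K]

/-- The multiset (as a list, with multiplicity) of shuffles of two words. -/
def shuffles {α : Type*} : List α → List α → List (List α)
  | [], v => [v]
  | u, [] => [u]
  | x :: u, y :: v =>
      ((shuffles u (y :: v)).map (x :: ·)) ++ ((shuffles (x :: u) v).map (y :: ·))
  termination_by u v => u.length + v.length

/-- A mould (at the level of evaluations) is alternal if all its shuffle sums over
pairs of nonempty words vanish. -/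
def Alternal (A : List K → K) : Prop :=
  ∀ u v : List K, u ≠ [] → v ≠ [] → ((shuffles u v).map A).sum = 0

/-- mould multiplication `mu`. -/
def mu (A B : List K → K) : List K → K :=
  fun w => ∑ k ∈ Finset.range (w.length + 1), A (w.take k) * B (w.drop k)

/-- `lu(A,B) = mu(A,B) - mu(B,A)`. -/
def lu (A B : List K → K) : List K → K :=
  fun w => mu A B w - mu B A w

/-- All decompositions of a word into two consecutive subwords. -/
def splits2 {α : Type*} (w : List α) : List (List α × List α) :=
  (List.range (w.length + 1)).map fun k => (w.take k, w.drop k)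

/-- All decompositions of a word into three consecutive subwords. -/
def splits3 {α : Type*} (w : List α) : List (List α × List α × List α) :=
  (splits2 w).flatMap fun p => (splits2 p.2).map fun q => (p.1, q.1, q.2)

/-- Add `s` to the first letter of a word. -/
def addFirst (s : K) : List K → List K
  | [] => []
  | x :: xs => (x + s) :: xs

/-- Add `s` to the last letter of a word. -/
def addLast (s : K) : List K → List K
  | [] => []
  | [x] => [x + s]
  | x :: xs => x :: addLast s xs

/-- `amit` for u-moulds: `(amit(B)·A)(w) = Σ_{w=abc, b,c≠∅} A(a⌈c) B(b)`. -/
def amitU (B A : List K → K) : List K → K := fun w =>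
  ((splits3 w).map fun p =>
    match p with
    | (_, [], _) => 0
    | (_, _, []) => 0
    | (a, b, c) => A (a ++ addFirst b.sum c) * B b).sum

/-- `anit` for u-moulds: `(anit(B)·A)(w) = Σ_{w=abc, a,b≠∅} A(a⌉c) B(b)`. -/
def anitU (B A : List K → K) : List K → K := fun w =>
  ((splits3 w).map fun p =>
    match p with
    | ([], _, _) => 0
    | (_, [], _) => 0
    | (a, b, c) => A (addLast b.sum a ++ c) * B b).sum

/-- `arit(B)·A = amit(B)·A - anit(B)·A` on u-moulds. -/
def aritU (B A : List K → K) : List K → K :=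
  fun w => amitU B A w - anitU B A w

/-- the ari bracket on u-moulds. -/
def ariU (A B : List K → K) : List K → K :=
  fun w => aritU B A w + lu A B w - aritU A B w

/-- `amit` for v-moulds. -/
def amitV (B A : List K → K) : List K → K := fun w =>
  ((splits3 w).map fun p =>
    match p with
    | (_, [], _) => 0
    | (_, _, []) => 0
    | (a, b, c0 :: c') => A (a ++ c0 :: c') * B (b.map (fun x => x - c0))).sum

/-- `anit` for v-moulds. -/
def anitV (B A : List K → K) : List K → K := fun w =>
  ((splits3 w).map fun p =>
    match p with
    | ([], _, _) => 0
    | (_, [], _) => 0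
    | (a, b, c) => A (a ++ c) * B (b.map (fun x => x - a.getLastD 0))).sum

/-- `arit(B)·A = amit(B)·A - anit(B)·A` on v-moulds. -/
def aritV (B A : List K → K) : List K → K :=
  fun w => amitV B A w - anitV B A w

/-- the ari bracket on v-moulds. -/
def ariV (A B : List K → K) : List K → K :=
  fun w => aritV B A w + lu A B w - aritV A B w

/-- `neg(A)(u_1,...,u_r) = A(-u_1,...,-u_r)`. -/
def negM (A : List K → K) : List K → K := fun w => A (w.map fun x => -x)

/-- `push(A)(u_1,...,u_r) = A(-u_1-⋯-u_r, u_1, ..., u_{r-1})`. -/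
def pushM (A : List K → K) : List K → K := fun w =>
  match w with
  | [] => A []
  | _ :: _ => A ((-w.sum) :: w.dropLast)

/-- `mantar(A)(u_1,...,u_r) = (-1)^{r-1} A(u_r,...,u_1)`. -/
def mantarM (A : List K → K) : List K → K :=
  fun w => (-1 : K) ^ (w.length + 1) * A w.reverse

/-- argument list for swap from u-moulds to v-moulds:
`(v_1,...,v_r) ↦ (v_r, v_{r-1}-v_r, ..., v_1-v_2)`. -/
def swapUargs (w : List K) : List K :=
  List.zipWith (· - ·) w.reverse (0 :: w.reverse)

/-- argument list for swap from v-moulds to u-moulds: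
`(u_1,...,u_r) ↦ (u_1+⋯+u_r, u_1+⋯+u_{r-1}, ..., u_1)`. -/
def swapVargs (w : List K) : List K :=
  (List.range w.length).map fun i => (w.take (w.length - i)).sum

/-- swap, sending a u-mould to a v-mould. -/
def swapUV (A : List K → K) : List K → K := fun w => A (swapUargs w)

/-- swap, sending a v-mould to a u-mould. -/
def swapVU (A : List K → K) : List K → K := fun w => A (swapVargs w)

/-- A constant-valued mould: its value depends only on the depth. -/
def IsConstantMould (C : List K → K) : Prop :=
  ∀ w w' : List K, w.length = w'.length → C w = C w'


lemma shuffles_nil_left {α : Type*} (v : List α) : shuffles ([] : List α) v = [v] := by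
  cases v <;> simp [shuffles]

lemma shuffles_nil_right {α : Type*} (u : List α) : shuffles u ([] : List α) = [u] := by
  cases u <;> simp [shuffles]

lemma shuffles_cons_cons {α : Type*} (x y : α) (u v : List α) :
    shuffles (x :: u) (y :: v) =
      ((shuffles u (y :: v)).map (x :: ·)) ++ ((shuffles (x :: u) v).map (y :: ·)) := by
  rw [shuffles]

/-- Auxiliary quantity: `Σ_{s ∈ sh(rev(take j w), drop (j+1) w)} A(w_j :: s)`. -/
def Pfun (A : List K → K) (w : List K) (j : ℕ) : K :=
  ((shuffles ((w.take j).reverse) (w.drop (j + 1))).map fun s => A (w.getD j 0 :: s)).sum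

lemma Pfun_zero (A : List K → K) (w : List K) (hw : w ≠ []) :
    Pfun A w 0 = A w := by
  obtain ⟨x, t, rfl⟩ := List.exists_cons_of_ne_nil hw
  simp [Pfun, shuffles_nil_left]

lemma Pfun_last (A : List K → K) (w : List K) (hw : w ≠ []) :
    Pfun A w (w.length - 1) = A w.reverse := by
  have hrev : w.reverse ≠ [] := by simpa using hw
  obtain ⟨y, s, hy⟩ := List.exists_cons_of_ne_nil hrev
  have hw' : w = s.reverse ++ [y] := by
    rw [← List.reverse_reverse w, hy]; simp
  subst hw'
  have hlen : (s.reverse ++ [y]).length - 1 = s.length := by simp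
  rw [hlen, Pfun]
  have htake : (s.reverse ++ [y]).take s.length = s.reverse := by
    rw [List.take_left']; simp
  have hdrop : (s.reverse ++ [y]).drop (s.length + 1) = [] := by
    apply List.drop_eq_nil_of_le; simp
  have hgetD : (s.reverse ++ [y]).getD s.length 0 = y := by
    rw [List.getD_eq_getElem?_getD]
    simp
  rw [htake, hdrop, hgetD, shuffles_nil_right]
  simp

lemma Pfun_succ (A : List K → K) (hA : Alternal A) (w : List K) (k : ℕ)
    (hk : k + 2 ≤ w.length) :
    Pfun A w (k + 1) = - Pfun A w k := by
  have hk0 : k < w.length := by omega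
  have hk1 : k + 1 < w.length := by omega
  set a := w.getD k 0 with ha
  set b := w.getD (k + 1) 0 with hb
  have h1 : (w.take (k + 1)).reverse = a :: (w.take k).reverse := by
    rw [List.take_succ]
    have : w[k]? = some a := by
      rw [ha, List.getD_eq_getElem?_getD, List.getElem?_eq_getElem hk0]
      simp
    rw [this]
    simp
  have h2 : w.drop (k + 1) = b :: w.drop (k + 2) := by
    rw [List.drop_eq_getElem_cons hk1]
    congr 1
    rw [hb, List.getD_eq_getElem?_getD]
    simp [hk1]
  have hne1 : (w.take (k + 1)).reverse ≠ [] := by rw [h1]; simp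
  have hne2 : w.drop (k + 1) ≠ [] := by rw [h2]; simp
  have hzero := hA _ _ hne1 hne2
  rw [h1, h2, shuffles_cons_cons, List.map_append, List.sum_append,
    List.map_map, List.map_map] at hzero
  have e1 : ((shuffles ((w.take k).reverse) (b :: w.drop (k + 2))).map
      (A ∘ (a :: ·))).sum = Pfun A w k := by
    rw [Pfun, ← h2]
    rfl
  have e2 : ((shuffles (a :: (w.take k).reverse) (w.drop (k + 2))).map
      (A ∘ (b :: ·))).sum = Pfun A w (k + 1) := by
    rw [Pfun, h1]
    rfl
  rw [e1, e2] at hzero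
  linear_combination hzero

/-- an alternal mould is mantar-invariant:
`A(u_1,...,u_r) = (-1)^{r-1} A(u_r,...,u_1)` for `r ≥ 1`. -/
theorem alternal_mantar_invariant (A : List K → K) (hA : Alternal A) :
    ∀ w : List K, w ≠ [] → A w = (-1 : K) ^ (w.length - 1) * A w.reverse := by
  intro w hw
  have key : ∀ j, j + 1 ≤ w.length → Pfun A w j = (-1 : K) ^ j * Pfun A w 0 := by
    intro j
    induction j with
    | zero => intro _; simp
    | succ n ih =>
      intro h
      rw [Pfun_succ A hA w n (by omega), ih (by omega)]
      ring
  have hr : 1 ≤ w.length := List.length_pos_iff.mpr hw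
  have hkey := key (w.length - 1) (by omega)
  rw [Pfun_last A w hw, Pfun_zero A w hw] at hkey
  rw [hkey, ← mul_assoc, ← pow_add]
  have hev : Even (w.length - 1 + (w.length - 1)) := ⟨_, rfl⟩
  rw [hev.neg_one_pow, one_mul]
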